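/- Let μ, ν be probability measures on a standard Borel space (Ω, B), with μ ≪ ν, and let (P_n) be a refining sequence of finite measurable partitions whose union generates B. Then D(μ∥ν) = sup_n H_{μ∥ν}(P_n), and the sequence H_{μ∥ν}(P_n) is nondecreasing in n. -/

import Mathlib

open MeasureTheory

/-- Kullback–Leibler divergence: `∫ log (dμ/dν) dμ` if `μ ≪ ν` and the integrand is
integrable, and `+∞` otherwise. -/
noncomputable def klDivergence {Ω : Type*} [MeasurableSpace Ω] (μ ν : Measure Ω) : EReal :=
  open Classical in
  if μ ≪ ν ∧ Integrable (fun x => Real.log (μ.rnDeriv ν x).toReal) μ then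
    ((∫ x, Real.log (μ.rnDeriv ν x).toReal ∂μ : ℝ) : EReal)
  else ⊤

/-- Relative entropy of `μ` with respect to `ν` over a finite partition `P`
(with the convention `0 · log 0 = 0`, automatic since `0 * log 0 = 0` in Lean). -/
noncomputable def relEntPartition {Ω : Type*} [MeasurableSpace Ω]
    (μ ν : Measure Ω) (P : Finset (Set Ω)) : ℝ :=
  ∑ A ∈ P, (μ A).toReal * Real.log ((μ A).toReal / (ν A).toReal)

open Filter Set

section Aux

set_option linter.unusedSectionVars false

variable {Ω : Type*} [mΩ : MeasurableSpace Ω]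

/-- lower bound for `x * log x`. -/
lemma mul_log_ge {x : ℝ} (hx : 0 ≤ x) : -Real.exp (-1) ≤ x * Real.log x := by
  rcases eq_or_lt_of_le hx with h | h
  · simp [← h]; positivity
  · set t := Real.log x with ht
    have hx' : x = Real.exp t := (Real.exp_log h).symm
    rw [hx', mul_comm]
    rcases le_or_gt 0 t with h0 | h0
    · have : (0:ℝ) ≤ Real.exp t * t := by positivity
      linarith [Real.exp_pos (-1 : ℝ)]
    · have h1 : -t ≤ Real.exp (-(t+1)) := by
        have := Real.add_one_le_exp (-(t+1))
        linarith
      have h2 : Real.exp (t+1) * (-t) ≤ 1 := by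
        have := mul_le_mul_of_nonneg_left h1 (Real.exp_pos (t+1)).le
        rwa [← Real.exp_add, add_neg_cancel, Real.exp_zero] at this
      have h3 : Real.exp (t + 1) * t ≥ -1 := by nlinarith
      have h4 : Real.exp (t+1) = Real.exp 1 * Real.exp t := by
        rw [← Real.exp_add]; ring_nf
      have h5 : Real.exp (-1) = (Real.exp 1)⁻¹ := by
        rw [Real.exp_neg]
      rw [h5]
      rw [h4] at h3
      have he : (0:ℝ) < Real.exp 1 := Real.exp_pos 1
      have heq : -(Real.exp 1)⁻¹ = -1 / Real.exp 1 := by field_simp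
      have hdl : (-1) / Real.exp 1 ≤ t * Real.exp t := by
        rw [div_le_iff₀ he]; nlinarith [h3]
      linarith

/-- the conditional density: a simple function equal on each cell `A` to `μ A / ν A`. -/
noncomputable def pdens (μ ν : Measure Ω) (P : Finset (Set Ω)) : Ω → ℝ :=
  fun x => ∑ A ∈ P, Set.indicator A (fun _ => (μ A).toReal / (ν A).toReal) x

variable {μ ν : Measure Ω} {P : Finset (Set Ω)}

lemma sum_indicator_eq_of_mem (hdisj : ((P : Set (Set Ω))).PairwiseDisjoint id)
    (c : Set Ω → ℝ) {A : Set Ω} (hA : A ∈ P) {x : Ω} (hx : x ∈ A) :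
    ∑ B ∈ P, Set.indicator B (fun _ => c B) x = c A := by
  rw [Finset.sum_eq_single A]
  · exact Set.indicator_of_mem hx _
  · intro B hB hBA
    refine Set.indicator_of_notMem (fun hxB => ?_) _
    exact (Set.disjoint_left.mp (hdisj (Finset.mem_coe.mpr hA) (Finset.mem_coe.mpr hB)
      (Ne.symm hBA)) hx) hxB
  · intro h; exact absurd hA h

lemma exists_mem_partition (hcover : ⋃₀ (P : Set (Set Ω)) = Set.univ) (x : Ω) :
    ∃ A ∈ P, x ∈ A := by
  have : x ∈ ⋃₀ (P : Set (Set Ω)) := by rw [hcover]; trivial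
  obtain ⟨A, hA, hx⟩ := this
  exact ⟨A, hA, hx⟩

lemma pdens_eq_of_mem (hdisj : ((P : Set (Set Ω))).PairwiseDisjoint id)
    {A : Set Ω} (hA : A ∈ P) {x : Ω} (hx : x ∈ A) :
    pdens μ ν P x = (μ A).toReal / (ν A).toReal :=
  sum_indicator_eq_of_mem hdisj _ hA hx

lemma pdens_nonneg (x : Ω) : 0 ≤ pdens μ ν P x := by
  refine Finset.sum_nonneg fun A _ => Set.indicator_nonneg (fun _ _ => by positivity) x

lemma pdens_measurable (hmeas : ∀ A ∈ P, MeasurableSet A) : Measurable (pdens μ ν P) := by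
  refine Finset.measurable_sum _ fun A hA => (measurable_const.indicator (hmeas A hA))

lemma pdens_stronglyMeasurable_gen :
    StronglyMeasurable[MeasurableSpace.generateFrom (P : Set (Set Ω))] (pdens μ ν P) := by
  refine Finset.stronglyMeasurable_fun_sum _ fun A hA => ?_
  exact stronglyMeasurable_const.indicator
    (MeasurableSpace.measurableSet_generateFrom (Finset.mem_coe.mpr hA))

lemma integrable_sum_indicator [IsFiniteMeasure ν] (hmeas : ∀ A ∈ P, MeasurableSet A)
    (c : Set Ω → ℝ) :
    Integrable (fun x => ∑ A ∈ P, Set.indicator A (fun _ => c A) x) ν := by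
  refine integrable_finset_sum _ fun A hA => ?_
  exact (integrable_const (c A)).indicator (hmeas A hA)

lemma integral_sum_indicator [IsFiniteMeasure ν] (hmeas : ∀ A ∈ P, MeasurableSet A)
    (c : Set Ω → ℝ) :
    ∫ x, ∑ A ∈ P, Set.indicator A (fun _ => c A) x ∂ν
      = ∑ A ∈ P, (ν A).toReal * c A := by
  rw [integral_finset_sum _ fun A hA => (integrable_const (c A)).indicator (hmeas A hA)]
  refine Finset.sum_congr rfl fun A hA => ?_
  rw [integral_indicator_const _ (hmeas A hA), measureReal_def, smul_eq_mul]

lemma pdens_integrable [IsFiniteMeasure ν] (hmeas : ∀ A ∈ P, MeasurableSet A) :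
    Integrable (pdens μ ν P) ν :=
  integrable_sum_indicator hmeas _

lemma phi_pdens_eq (hdisj : ((P : Set (Set Ω))).PairwiseDisjoint id)
    (hcover : ⋃₀ (P : Set (Set Ω)) = Set.univ) :
    (fun x => pdens μ ν P x * Real.log (pdens μ ν P x))
      = fun x => ∑ A ∈ P, Set.indicator A
          (fun _ => ((μ A).toReal / (ν A).toReal) * Real.log ((μ A).toReal / (ν A).toReal)) x := by
  funext x
  obtain ⟨A, hA, hx⟩ := exists_mem_partition hcover x
  rw [pdens_eq_of_mem hdisj hA hx,
    sum_indicator_eq_of_mem hdisj (fun B => ((μ B).toReal / (ν B).toReal) *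
      Real.log ((μ B).toReal / (ν B).toReal)) hA hx]

lemma phi_pdens_integrable [IsFiniteMeasure ν] (hmeas : ∀ A ∈ P, MeasurableSet A)
    (hdisj : ((P : Set (Set Ω))).PairwiseDisjoint id)
    (hcover : ⋃₀ (P : Set (Set Ω)) = Set.univ) :
    Integrable (fun x => pdens μ ν P x * Real.log (pdens μ ν P x)) ν := by
  rw [phi_pdens_eq hdisj hcover]
  exact integrable_sum_indicator hmeas _

lemma integral_phi_pdens [IsFiniteMeasure μ] [IsFiniteMeasure ν] (hac : μ ≪ ν)
    (hmeas : ∀ A ∈ P, MeasurableSet A)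
    (hdisj : ((P : Set (Set Ω))).PairwiseDisjoint id)
    (hcover : ⋃₀ (P : Set (Set Ω)) = Set.univ) :
    ∫ x, pdens μ ν P x * Real.log (pdens μ ν P x) ∂ν = relEntPartition μ ν P := by
  rw [phi_pdens_eq hdisj hcover, integral_sum_indicator hmeas]
  refine Finset.sum_congr rfl fun A hA => ?_
  by_cases hν : (ν A).toReal = 0
  · have hν0 : ν A = 0 := by
      simpa [ENNReal.toReal_eq_zero_iff, measure_ne_top ν A] using hν
    have hμ0 : μ A = 0 := hac hν0
    simp [hν, hμ0]
  · rw [← mul_assoc, mul_div_cancel₀ _ hν]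

/-- Jensen inequality for one cell. -/
lemma jensen_cell [IsFiniteMeasure ν] {A : Set Ω} (hA : MeasurableSet A)
    {h : Ω → ℝ} (h0 : 0 ≤ᵐ[ν] h) (hint : Integrable h ν)
    (hφint : Integrable (fun x => h x * Real.log (h x)) ν)
    (hAint : ∫ x in A, h x ∂ν = (μ A).toReal) :
    (μ A).toReal * Real.log ((μ A).toReal / (ν A).toReal)
      ≤ ∫ x in A, h x * Real.log (h x) ∂ν := by
  by_cases hν : ν A = 0
  · have hres : ν.restrict A = 0 := Measure.restrict_eq_zero.mpr hν
    have hμ : (μ A).toReal = 0 := by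
      rw [← hAint]; simp [hres]
    rw [hμ]; simp [hres]
  · haveI : NeZero (ν.restrict A) := ⟨fun hzero => hν (Measure.restrict_eq_zero.mp hzero)⟩
    have hνA : 0 < (ν A).toReal := ENNReal.toReal_pos hν (measure_ne_top ν A)
    have havg : ⨍ x, h x ∂(ν.restrict A) = (μ A).toReal / (ν A).toReal := by
      rw [average_eq, measureReal_restrict_apply_univ, measureReal_def, smul_eq_mul, hAint, inv_mul_eq_div]
    have hJ := Real.convexOn_mul_log.map_average_le Real.continuous_mul_log.continuousOn
      isClosed_Ici (ae_restrict_of_ae (h0.mono fun x hx => (Set.mem_Ici.mpr hx)))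
      hint.integrableOn (hφint.integrableOn (s := A))
    rw [havg] at hJ
    rw [average_eq, measureReal_restrict_apply_univ, measureReal_def, smul_eq_mul] at hJ
    have h2 := mul_le_mul_of_nonneg_left hJ hνA.le
    rw [mul_inv_cancel_left₀ hνA.ne'] at h2
    have hkey : (ν A).toReal * ((μ A).toReal / (ν A).toReal) = (μ A).toReal := by
      field_simp
    calc (μ A).toReal * Real.log ((μ A).toReal / (ν A).toReal)
        = (ν A).toReal * ((μ A).toReal / (ν A).toReal *
            Real.log ((μ A).toReal / (ν A).toReal)) := by rw [← mul_assoc, hkey]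
      _ ≤ ∫ x in A, h x * Real.log (h x) ∂ν := h2

/-- Jensen inequality over a partition. -/
lemma jensen_partition [IsFiniteMeasure ν] (hmeas : ∀ A ∈ P, MeasurableSet A)
    (hdisj : ((P : Set (Set Ω))).PairwiseDisjoint id)
    (hcover : ⋃₀ (P : Set (Set Ω)) = Set.univ)
    {h : Ω → ℝ} (h0 : 0 ≤ᵐ[ν] h) (hint : Integrable h ν)
    (hφint : Integrable (fun x => h x * Real.log (h x)) ν)
    (hAint : ∀ A ∈ P, ∫ x in A, h x ∂ν = (μ A).toReal) :
    relEntPartition μ ν P ≤ ∫ x, h x * Real.log (h x) ∂ν := by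
  have hU : (Set.univ : Set Ω) = ⋃ A ∈ P, (A : Set Ω) := by
    rw [← hcover, Set.sUnion_eq_biUnion, Finset.set_biUnion_coe]
  have hsplit : ∫ x, h x * Real.log (h x) ∂ν
      = ∑ A ∈ P, ∫ x in A, h x * Real.log (h x) ∂ν := by
    rw [← setIntegral_univ, hU]
    exact integral_biUnion_finset P hmeas hdisj (fun A _ => hφint.integrableOn)
  rw [hsplit]
  exact Finset.sum_le_sum fun A hA =>
    jensen_cell (hmeas A hA) h0 hint hφint (hAint A hA)

lemma isPiSystem_partition (hdisj : ((P : Set (Set Ω))).PairwiseDisjoint id) :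
    IsPiSystem (P : Set (Set Ω)) := by
  intro s hs t ht hst
  rcases eq_or_ne s t with rfl | hne
  · simpa using hs
  · exact absurd (Set.disjoint_iff_inter_eq_empty.mp (hdisj hs ht hne))
      (Set.nonempty_iff_ne_empty.mp hst)

lemma setIntegral_pdens_eq [IsProbabilityMeasure μ] [IsProbabilityMeasure ν] (hac : μ ≪ ν)
    (hmeas : ∀ A ∈ P, MeasurableSet A)
    (hdisj : ((P : Set (Set Ω))).PairwiseDisjoint id)
    (hcover : ⋃₀ (P : Set (Set Ω)) = Set.univ)
    {s : Set Ω} (hs : MeasurableSet[MeasurableSpace.generateFrom (P : Set (Set Ω))] s) :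
    ∫ x in s, pdens μ ν P x ∂ν = (μ s).toReal := by
  have hgle : MeasurableSpace.generateFrom (P : Set (Set Ω)) ≤ mΩ :=
    MeasurableSpace.generateFrom_le fun A hA => hmeas A (Finset.mem_coe.mp hA)
  set κ := ν.withDensity (fun x => ENNReal.ofReal (pdens μ ν P x)) with hκ
  have hκA : ∀ A ∈ P, κ A = μ A := by
    intro A hA
    rw [hκ, withDensity_apply _ (hmeas A hA)]
    have h1 : ∫⁻ x in A, ENNReal.ofReal (pdens μ ν P x) ∂ν
        = ∫⁻ _ in A, ENNReal.ofReal ((μ A).toReal / (ν A).toReal) ∂ν := by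
      refine setLIntegral_congr_fun (hmeas A hA) (fun x hx => ?_)
      rw [pdens_eq_of_mem hdisj hA hx]
    rw [h1, setLIntegral_const]
    by_cases hν : ν A = 0
    · simp [hν, hac hν]
    · have hνR : (ν A).toReal ≠ 0 := ENNReal.toReal_ne_zero.mpr ⟨hν, measure_ne_top ν A⟩
      have hstep : ENNReal.ofReal ((μ A).toReal / (ν A).toReal) * ν A
          = ENNReal.ofReal ((μ A).toReal / (ν A).toReal * (ν A).toReal) := by
        rw [ENNReal.ofReal_mul (by positivity), ENNReal.ofReal_toReal (measure_ne_top ν A)]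
      rw [hstep, div_mul_cancel₀ _ hνR, ENNReal.ofReal_toReal (measure_ne_top μ A)]
  have hU : (Set.univ : Set Ω) = ⋃ A ∈ P, (A : Set Ω) := by
    rw [← hcover, Set.sUnion_eq_biUnion, Finset.set_biUnion_coe]
  have hκuniv : κ Set.univ = 1 := by
    have hsum : κ (⋃ A ∈ P, (A : Set Ω)) = ∑ A ∈ P, κ A :=
      measure_biUnion_finset hdisj (fun A hA => hmeas A hA)
    have hsum' : μ (⋃ A ∈ P, (A : Set Ω)) = ∑ A ∈ P, μ A :=
      measure_biUnion_finset hdisj (fun A hA => hmeas A hA)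
    rw [hU, hsum, Finset.sum_congr rfl hκA, ← hsum', ← hU, measure_univ]
  haveI : IsProbabilityMeasure κ := ⟨hκuniv⟩
  have key : ∀ t, MeasurableSet[MeasurableSpace.generateFrom (P : Set (Set Ω))] t → κ t = μ t := by
    refine MeasurableSpace.induction_on_inter (C := fun t _ => κ t = μ t) (s := (P : Set (Set Ω)))
      (m := MeasurableSpace.generateFrom (P : Set (Set Ω))) rfl (isPiSystem_partition hdisj)
      (by simp) (fun A hA => hκA A (Finset.mem_coe.mp hA)) ?_ ?_
    · intro t htm ht
      rw [measure_compl (hgle t htm) (measure_ne_top κ t),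
        measure_compl (hgle t htm) (measure_ne_top μ t), ht, measure_univ, measure_univ]
    · intro g hgdisj hgm hgeq
      rw [measure_iUnion hgdisj (fun i => hgle _ (hgm i)),
        measure_iUnion hgdisj (fun i => hgle _ (hgm i))]
      exact tsum_congr hgeq
  have hmeass : MeasurableSet s := hgle s hs
  rw [integral_eq_lintegral_of_nonneg_ae (Filter.Eventually.of_forall fun x => pdens_nonneg x)
    ((pdens_measurable hmeas).aestronglyMeasurable.restrict)]
  have : ∫⁻ x, ENNReal.ofReal (pdens μ ν P x) ∂(ν.restrict s) = κ s :=
    (withDensity_apply _ hmeass).symm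
  rw [this, key s hs]

lemma pdens_ae_eq_condexp [IsProbabilityMeasure μ] [IsProbabilityMeasure ν] (hac : μ ≪ ν)
    (hmeas : ∀ A ∈ P, MeasurableSet A)
    (hdisj : ((P : Set (Set Ω))).PairwiseDisjoint id)
    (hcover : ⋃₀ (P : Set (Set Ω)) = Set.univ) :
    pdens μ ν P =ᵐ[ν]
      ν[(fun x => (μ.rnDeriv ν x).toReal) | MeasurableSpace.generateFrom (P : Set (Set Ω))] := by
  have hgle : MeasurableSpace.generateFrom (P : Set (Set Ω)) ≤ mΩ :=
    MeasurableSpace.generateFrom_le fun A hA => hmeas A (Finset.mem_coe.mp hA)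
  refine ae_eq_condExp_of_forall_setIntegral_eq hgle Measure.integrable_toReal_rnDeriv
    (fun s _ _ => (pdens_integrable hmeas).integrableOn) (fun s hs _ => ?_)
    (pdens_stronglyMeasurable_gen.aestronglyMeasurable)
  rw [setIntegral_pdens_eq hac hmeas hdisj hcover hs,
    Measure.setIntegral_toReal_rnDeriv hac s, measureReal_def]

end Aux

/-- on a standard Borel space, for `μ ≪ ν` and a refining sequence of
finite measurable partitions whose union generates the σ-algebra, the KL divergence
equals the supremum of the relative entropies over the partitions, and these relative
entropies are nondecreasing. -/
theorem stmt4 {Ω : Type*} [mΩ : MeasurableSpace Ω] [StandardBorelSpace Ω]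
    (μ ν : Measure Ω) [IsProbabilityMeasure μ] [IsProbabilityMeasure ν]
    (hac : μ ≪ ν)
    (P : ℕ → Finset (Set Ω))
    (hmeas : ∀ n, ∀ A ∈ P n, MeasurableSet A)
    (hdisj : ∀ n, ((P n : Set (Set Ω))).PairwiseDisjoint id)
    (hcover : ∀ n, ⋃₀ (P n : Set (Set Ω)) = Set.univ)
    (hrefine : ∀ n, ∀ A ∈ P (n + 1), ∃ B ∈ P n, A ⊆ B)
    (hgen : MeasurableSpace.generateFrom {A : Set Ω | ∃ n, A ∈ P n} = mΩ) :
    (klDivergence μ ν = ⨆ n : ℕ, ((relEntPartition μ ν (P n) : ℝ) : EReal)) ∧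
      Monotone (fun n => relEntPartition μ ν (P n)) := by
  classical
  set f : Ω → ℝ := fun x => (μ.rnDeriv ν x).toReal with hfdef
  set c : ℝ := Real.exp (-1) with hcdef
  have hcpos : 0 < c := Real.exp_pos _
  set g : ℕ → Ω → ℝ := fun n => pdens μ ν (P n) with hgdef
  set H : ℕ → ℝ := fun n => relEntPartition μ ν (P n) with hHdef
  have hfnn : ∀ x, 0 ≤ f x := fun x => ENNReal.toReal_nonneg
  have hfmeas : Measurable f := (Measure.measurable_rnDeriv μ ν).ennreal_toReal
  have hfint : Integrable f ν := Measure.integrable_toReal_rnDeriv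
  have hHeq : ∀ n, H n = ∫ x, g n x * Real.log (g n x) ∂ν := fun n =>
    (integral_phi_pdens hac (hmeas n) (hdisj n) (hcover n)).symm
  -- refinement: each cell of `P n` decomposes into cells of `P (n+1)`
  have hatom : ∀ n, ∀ B ∈ P n,
      B = ⋃ A ∈ (P (n+1)).filter (fun A => A ⊆ B), (A : Set Ω) := by
    intro n B hB
    ext x
    constructor
    · intro hx
      obtain ⟨A, hA, hxA⟩ := exists_mem_partition (hcover (n+1)) x
      obtain ⟨B', hB', hAB'⟩ := hrefine n A hA
      have hBB' : B = B' := by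
        by_contra hne
        exact (Set.disjoint_left.mp (hdisj n (Finset.mem_coe.mpr hB) (Finset.mem_coe.mpr hB') hne)
          hx) (hAB' hxA)
      refine Set.mem_biUnion (Finset.mem_filter.mpr ⟨hA, by rw [hBB']; exact hAB'⟩) hxA
    · intro hx
      obtain ⟨A, hA, hxA⟩ := Set.mem_iUnion₂.mp hx
      exact (Finset.mem_filter.mp hA).2 hxA
  have hgenmono : ∀ n, MeasurableSpace.generateFrom ((P n : Set (Set Ω)))
      ≤ MeasurableSpace.generateFrom ((P (n+1) : Set (Set Ω))) := by
    intro n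
    refine MeasurableSpace.generateFrom_le fun B hB => ?_
    rw [hatom n B (Finset.mem_coe.mp hB)]
    refine Finset.measurableSet_biUnion _ fun A hA => ?_
    exact MeasurableSpace.measurableSet_generateFrom
      (Finset.mem_coe.mpr (Finset.mem_filter.mp hA).1)
  have hsetint : ∀ n, ∀ s : Set Ω,
      MeasurableSet[MeasurableSpace.generateFrom ((P n : Set (Set Ω)))] s →
      ∫ x in s, g n x ∂ν = (μ s).toReal := fun n s hs =>
    setIntegral_pdens_eq hac (hmeas n) (hdisj n) (hcover n) hs
  have hmono : Monotone H := by
    refine monotone_nat_of_le_succ fun n => ?_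
    rw [hHeq (n+1)]
    refine jensen_partition (hmeas n) (hdisj n) (hcover n)
      (Filter.Eventually.of_forall fun x => pdens_nonneg x) (pdens_integrable (hmeas (n+1)))
      (phi_pdens_integrable (hmeas (n+1)) (hdisj (n+1)) (hcover (n+1))) ?_
    intro A hA
    exact hsetint (n+1) A (hgenmono n _
      (MeasurableSpace.measurableSet_generateFrom (Finset.mem_coe.mpr hA)))
  refine ⟨?_, hmono⟩
  -- the filtration and martingale convergence
  let ℱ : Filtration ℕ mΩ :=
    { seq := fun n => MeasurableSpace.generateFrom ((P n : Set (Set Ω)))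
      mono' := monotone_nat_of_le_succ hgenmono
      le' := fun n => MeasurableSpace.generateFrom_le fun A hA => hmeas n A (Finset.mem_coe.mp hA) }
  have hsup : (⨆ n, MeasurableSpace.generateFrom ((P n : Set (Set Ω)))) = mΩ := by
    refine le_antisymm (iSup_le fun n =>
      MeasurableSpace.generateFrom_le fun A hA => hmeas n A (Finset.mem_coe.mp hA)) ?_
    rw [← hgen]
    refine MeasurableSpace.generateFrom_le ?_
    rintro A ⟨n, hA⟩
    exact (le_iSup (fun n => MeasurableSpace.generateFrom ((P n : Set (Set Ω)))) n) _
      (MeasurableSpace.measurableSet_generateFrom (Finset.mem_coe.mpr hA))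
  have hfmeas' : StronglyMeasurable[⨆ n, ℱ n] f := by
    have hEq : (⨆ n, ℱ n) = mΩ := hsup
    rw [hEq]
    exact hfmeas.stronglyMeasurable
  have hcond : ∀ n, g n =ᵐ[ν] ν[f | ℱ n] := fun n =>
    pdens_ae_eq_condexp hac (hmeas n) (hdisj n) (hcover n)
  have htendsto : ∀ᵐ x ∂ν, Filter.Tendsto (fun n => g n x) Filter.atTop (nhds (f x)) := by
    have h1 := hfint.tendsto_ae_condExp hfmeas'
    have h2 : ∀ᵐ x ∂ν, ∀ n, g n x = (ν[f | ℱ n]) x :=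
      MeasureTheory.ae_all_iff.mpr fun n => hcond n
    filter_upwards [h1, h2] with x hx1 hx2
    have : (fun n => g n x) = fun n => (ν[f | ℱ n]) x := funext hx2
    rw [this]
    exact hx1
  -- Fatou's lemma
  have hgmeasb : ∀ n, Measurable (g n) := fun n => pdens_measurable (hmeas n)
  have hφg_int : ∀ n, Integrable (fun x => g n x * Real.log (g n x)) ν := fun n =>
    phi_pdens_integrable (hmeas n) (hdisj n) (hcover n)
  have hlbg : ∀ n x, 0 ≤ g n x * Real.log (g n x) + c := fun n x => by
    have := mul_log_ge (show (0:ℝ) ≤ g n x from pdens_nonneg x)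
    rw [hcdef]; linarith
  have hlbf : ∀ x, 0 ≤ f x * Real.log (f x) + c := fun x => by
    have := mul_log_ge (show (0:ℝ) ≤ f x from hfnn x)
    rw [hcdef]; linarith
  have hlint : ∀ n, ∫⁻ x, ENNReal.ofReal (g n x * Real.log (g n x) + c) ∂ν
      = ENNReal.ofReal (H n + c) := by
    intro n
    have hi : Integrable (fun x => g n x * Real.log (g n x) + c) ν :=
      (hφg_int n).add (integrable_const c)
    rw [← ofReal_integral_eq_lintegral_ofReal hi (Filter.Eventually.of_forall (hlbg n))]
    congr 1
    rw [integral_add (hφg_int n) (integrable_const c), integral_const, probReal_univ,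
      one_smul, hHeq n]
  have hFatou : ∫⁻ x, ENNReal.ofReal (f x * Real.log (f x) + c) ∂ν
      ≤ Filter.liminf (fun n => ENNReal.ofReal (H n + c)) Filter.atTop := by
    have hae : ∀ᵐ x ∂ν, ENNReal.ofReal (f x * Real.log (f x) + c)
        = Filter.liminf (fun n => ENNReal.ofReal (g n x * Real.log (g n x) + c)) Filter.atTop := by
      filter_upwards [htendsto] with x hx
      have hcont : Filter.Tendsto (fun n => ENNReal.ofReal (g n x * Real.log (g n x) + c))
          Filter.atTop (nhds (ENNReal.ofReal (f x * Real.log (f x) + c))) := by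
        exact (ENNReal.continuous_ofReal.tendsto _).comp
          (((Real.continuous_mul_log.tendsto _).comp hx).add_const c)
      exact hcont.liminf_eq.symm
    calc ∫⁻ x, ENNReal.ofReal (f x * Real.log (f x) + c) ∂ν
        = ∫⁻ x, Filter.liminf
            (fun n => ENNReal.ofReal (g n x * Real.log (g n x) + c)) Filter.atTop ∂ν :=
          lintegral_congr_ae hae
      _ ≤ Filter.liminf
            (fun n => ∫⁻ x, ENNReal.ofReal (g n x * Real.log (g n x) + c) ∂ν) Filter.atTop :=
          lintegral_liminf_le fun n =>
            (((hgmeasb n).mul ((Real.measurable_log).comp (hgmeasb n))).add_const c).ennreal_ofReal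
      _ = Filter.liminf (fun n => ENNReal.ofReal (H n + c)) Filter.atTop := by
          simp only [hlint]
  by_cases hInt : Integrable (fun x => Real.log (f x)) μ
  · -- finite KL divergence
    have hkl : klDivergence μ ν = ((∫ x, Real.log (f x) ∂μ : ℝ) : EReal) := by
      rw [klDivergence, if_pos ⟨hac, hInt⟩]
    have hφf_int : Integrable (fun x => f x * Real.log (f x)) ν := by
      have := (integrable_rnDeriv_smul_iff hac (f := fun x => Real.log (f x))).mpr hInt
      simpa [smul_eq_mul] using this
    have hD : ∫ x, Real.log (f x) ∂μ = ∫ x, f x * Real.log (f x) ∂ν := by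
      rw [← integral_rnDeriv_smul hac (f := fun x => Real.log (f x))]
      simp [smul_eq_mul, hfdef]
    set Dr := ∫ x, f x * Real.log (f x) ∂ν with hDrdef
    haveI : NeZero ν := ⟨IsProbabilityMeasure.ne_zero ν⟩
    have hint1 : ∫ x, f x ∂ν = 1 := by
      rw [Measure.integral_toReal_rnDeriv hac]; simp
    have hDr0 : 0 ≤ Dr := by
      have hJ := Real.convexOn_mul_log.map_average_le Real.continuous_mul_log.continuousOn
        isClosed_Ici (Filter.Eventually.of_forall fun x => Set.mem_Ici.mpr (hfnn x)) hfint
        (hφf_int)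
      rw [average_eq, average_eq, probReal_univ, inv_one, one_smul, one_smul,
        hint1] at hJ
      simpa using hJ
    have hle : ∀ n, H n ≤ Dr := fun n =>
      jensen_partition (hmeas n) (hdisj n) (hcover n)
        (Filter.Eventually.of_forall hfnn) hfint hφf_int
        (fun A _ => Measure.setIntegral_toReal_rnDeriv hac A)
    have hbdd : BddAbove (Set.range H) := ⟨Dr, by rintro _ ⟨n, rfl⟩; exact hle n⟩
    set S := sSup (Set.range H) with hSdef
    have hSle : S ≤ Dr := csSup_le (Set.range_nonempty H) (by rintro _ ⟨n, rfl⟩; exact hle n)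
    have hHS : ∀ n, H n ≤ S := fun n => le_csSup hbdd ⟨n, rfl⟩
    have hHlb : ∀ n, -c ≤ H n := by
      intro n
      rw [hHeq n]
      have := integral_mono (integrable_const (-c)) (hφg_int n)
        (fun x => by linarith [hlbg n x])
      rwa [integral_const, probReal_univ, one_smul] at this
    have hliminf_le : Filter.liminf (fun n => ENNReal.ofReal (H n + c)) Filter.atTop
        ≤ ENNReal.ofReal (S + c) := by
      refine le_trans (Filter.liminf_le_liminf (Filter.Eventually.of_forall fun n =>
        ENNReal.ofReal_le_ofReal (show H n + c ≤ S + c by linarith [hHS n]))) ?_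
      simp [Filter.liminf_const]
    have hDrS : Dr ≤ S := by
      have heq1 : ENNReal.ofReal (Dr + c) = ∫⁻ x, ENNReal.ofReal (f x * Real.log (f x) + c) ∂ν := by
        have hi : Integrable (fun x => f x * Real.log (f x) + c) ν :=
          hφf_int.add (integrable_const c)
        rw [← ofReal_integral_eq_lintegral_ofReal hi (Filter.Eventually.of_forall hlbf)]
        congr 1
        rw [integral_add hφf_int (integrable_const c),
          integral_const, probReal_univ, one_smul]
      have h1 : ENNReal.ofReal (Dr + c) ≤ ENNReal.ofReal (S + c) :=
        heq1 ▸ (hFatou.trans hliminf_le)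
      have hScpos : 0 ≤ S + c := by linarith [hHlb 0, hHS 0]
      have := (ENNReal.ofReal_le_ofReal_iff hScpos).mp h1
      linarith
    have hSD : S = Dr := le_antisymm hSle hDrS
    rw [hkl, hD]
    refine (iSup_eq_of_forall_le_of_forall_lt_exists_gt
      (fun n => EReal.coe_le_coe_iff.mpr (hle n)) (fun w hw => ?_)).symm
    induction w using EReal.rec with
    | bot => exact ⟨0, EReal.bot_lt_coe _⟩
    | coe r =>
      have hr : r < S := by
        have := EReal.coe_lt_coe_iff.mp hw
        rw [hSD]; exact this
      obtain ⟨_, ⟨n, rfl⟩, hn⟩ := exists_lt_of_lt_csSup (Set.range_nonempty H) hr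
      exact ⟨n, EReal.coe_lt_coe_iff.mpr hn⟩
    | top => exact absurd hw (by simp)
  · -- infinite KL divergence
    have hkl : klDivergence μ ν = ⊤ := by
      rw [klDivergence, if_neg (fun hcon => hInt hcon.2)]
    have hφf_nint : ¬ Integrable (fun x => f x * Real.log (f x)) ν := by
      intro hcon
      apply hInt
      exact (integrable_rnDeriv_smul_iff hac (f := fun x => Real.log (f x))).mp
        (by simpa [smul_eq_mul] using hcon)
    have htop : ∫⁻ x, ENNReal.ofReal (f x * Real.log (f x) + c) ∂ν = ⊤ := by
      by_contra hne
      apply hφf_nint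
      have hint2 : Integrable (fun x => f x * Real.log (f x) + c) ν := by
        refine ⟨((hfmeas.mul ((Real.measurable_log).comp hfmeas)).add_const c).aestronglyMeasurable,
          ?_⟩
        rw [hasFiniteIntegral_iff_ofReal (Filter.Eventually.of_forall hlbf)]
        exact lt_top_iff_ne_top.mpr hne
      have h3 : Integrable (fun x => (f x * Real.log (f x) + c) - c) ν :=
        hint2.sub (integrable_const c)
      simpa using h3
    have hliminf_top : Filter.liminf (fun n => ENNReal.ofReal (H n + c)) Filter.atTop = ⊤ :=
      top_le_iff.mp (htop ▸ hFatou)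
    rw [hkl]
    refine (iSup_eq_of_forall_le_of_forall_lt_exists_gt (fun n => le_top) (fun w hw => ?_)).symm
    induction w using EReal.rec with
    | bot => exact ⟨0, EReal.bot_lt_coe _⟩
    | coe r =>
      have hlt : ENNReal.ofReal (max r 0 + c)
          < Filter.liminf (fun n => ENNReal.ofReal (H n + c)) Filter.atTop := by
        rw [hliminf_top]; exact ENNReal.ofReal_lt_top
      obtain ⟨n, hn⟩ := (Filter.eventually_lt_of_lt_liminf hlt).exists
      have hker : max r 0 + c < H n + c :=
        (ENNReal.ofReal_lt_ofReal_iff_of_nonneg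
          (by positivity)).mp hn
      refine ⟨n, EReal.coe_lt_coe_iff.mpr ?_⟩
      have := le_max_left r 0
      linarith
    | top => exact absurd hw (lt_irrefl _)
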